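/- Parabolic bound on the unstable spectrum of the Burgers linearization (scaling estimate from Section 1): Let ε > 0 and λ ∈ ℂ, and suppose w : ℝ → ℂ is twice continuously differentiable, not identically zero, with w and w' square-integrable on ℝ, satisfying w''(x) = (d/dx)( ū^ε(x) w(x) ) + λ w(x) for all x ∈ ℝ. Then Re λ ≤ ε²/4, and if Re λ ≥ 0 then also |Im λ| ≤ ε²; in particular every such λ with Re λ ≥ 0 satisfies |λ| ≤ 2ε². -/

import Mathlib

open MeasureTheory Filter Topology Set Complex

open MeasureTheory Filter Topology Set Complex

lemma limit_zero_of_integrable_atTop {g : ℝ → ℝ} (hg : Integrable g) {L : ℝ}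
    (h : Tendsto g atTop (nhds L)) : L = 0 := by
  by_contra hL
  have hL2 : 0 < |L| / 2 := by positivity
  have h2 : ∀ᶠ x in atTop, |L| / 2 ≤ |g x| :=
    h.abs.eventually (eventually_ge_nhds (by linarith))
  obtain ⟨M, hM⟩ := h2.exists_forall_of_atTop
  have hconst : Integrable (fun _ : ℝ => |L| / 2) (volume.restrict (Ici M)) := by
    refine Integrable.mono' hg.norm.integrableOn aestronglyMeasurable_const ?_
    exact (ae_restrict_iff' measurableSet_Ici).2 (ae_of_all _ fun x hx => by
      simpa [_root_.abs_of_nonneg hL2.le] using hM x hx)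
  rw [integrable_const_iff] at hconst
  rcases hconst with h0 | hfin
  · exact absurd h0 (by positivity)
  · simpa [Measure.restrict_apply_univ, Real.volume_Ici] using measure_lt_top (volume.restrict (Ici M)) univ

lemma limit_zero_of_integrable_atBot {g : ℝ → ℝ} (hg : Integrable g) {L : ℝ}
    (h : Tendsto g atBot (nhds L)) : L = 0 := by
  by_contra hL
  have hL2 : 0 < |L| / 2 := by positivity
  have h2 : ∀ᶠ x in atBot, |L| / 2 ≤ |g x| :=
    h.abs.eventually (eventually_ge_nhds (by linarith))
  obtain ⟨M, hM⟩ := h2.exists_forall_of_atBot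
  have hconst : Integrable (fun _ : ℝ => |L| / 2) (volume.restrict (Iic M)) := by
    refine Integrable.mono' hg.norm.integrableOn aestronglyMeasurable_const ?_
    exact (ae_restrict_iff' measurableSet_Iic).2 (ae_of_all _ fun x hx => by
      simpa [_root_.abs_of_nonneg hL2.le] using hM x hx)
  rw [integrable_const_iff] at hconst
  rcases hconst with h0 | hfin
  · exact absurd h0 (by positivity)
  · simpa [Measure.restrict_apply_univ, Real.volume_Iic] using measure_lt_top (volume.restrict (Iic M)) univ

lemma integral_deriv_eq_zero' {F F' : ℝ → ℂ} (hd : ∀ x, HasDerivAt F (F' x) x)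
    (hi : Integrable F') (ht : Tendsto F atTop (nhds 0)) (hb : Tendsto F atBot (nhds 0)) :
    ∫ x, F' x = 0 := by
  rw [← intervalIntegral.integral_Iic_add_Ioi (b := (0:ℝ)) hi.integrableOn hi.integrableOn,
    integral_Iic_of_hasDerivAt_of_tendsto' (fun x _ => hd x) hi.integrableOn hb,
    integral_Ioi_of_hasDerivAt_of_tendsto' (fun x _ => hd x) hi.integrableOn ht]
  ring

lemma tendsto_zero_of_memL2 {f f' : ℝ → ℂ} (hd : ∀ x, HasDerivAt f (f' x) x)
    (hc' : Continuous f') (hf : MemLp f 2 volume) (hf' : MemLp f' 2 volume) :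
    Tendsto f atTop (nhds 0) ∧ Tendsto f atBot (nhds 0) := by
  have hcf : Continuous f := by
    exact continuous_iff_continuousAt.2 fun x => (hd x).continuousAt
  -- the product h = f * conj f
  set h : ℝ → ℂ := fun x => f x * (starRingEnd ℂ) (f x) with hh
  set h' : ℝ → ℂ := fun x => f' x * (starRingEnd ℂ) (f x) + f x * (starRingEnd ℂ) (f' x) with hh'
  have hdh : ∀ x, HasDerivAt h (h' x) x := by
    intro x
    exact (hd x).mul (hd x).star
  set g : ℝ → ℝ := fun x => ‖f x‖ ^ 2 with hg
  set g' : ℝ → ℝ := fun x => (h' x).re with hg'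
  have hdg : ∀ x, HasDerivAt g (g' x) x := by
    intro x
    have h1 := Complex.reCLM.hasFDerivAt.comp_hasDerivAt x (hdh x)
    have h1' : HasDerivAt (fun y => Complex.reCLM (h y)) (Complex.reCLM (h' x)) x := h1
    have h2 : (fun y => Complex.reCLM (h y)) = g := by
      funext y
      show (h y).re = ‖f y‖ ^ 2
      rw [hh]
      simp only [Complex.mul_conj, Complex.normSq_eq_norm_sq]
      rw [Complex.ofReal_re]
    rw [h2] at h1'
    exact h1'
  have hgint : Integrable g :=
    (memLp_two_iff_integrable_sq_norm hf.aestronglyMeasurable).1 hf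
  have hg'int : Integrable g' := by
    have hfint : Integrable (fun x => ‖f x‖ ^ 2 + ‖f' x‖ ^ 2) :=
      hgint.add ((memLp_two_iff_integrable_sq_norm hf'.aestronglyMeasurable).1 hf')
    refine Integrable.mono' hfint ?_ (ae_of_all _ fun x => ?_)
    · exact (Complex.continuous_re.comp ((hc'.mul (continuous_star.comp hcf)).add
        (hcf.mul (continuous_star.comp hc')))).aestronglyMeasurable
    · have h1 : ‖g' x‖ ≤ ‖h' x‖ := by
        simpa using Complex.abs_re_le_norm (h' x)
      have h2 : ‖h' x‖ ≤ ‖f' x‖ * ‖f x‖ + ‖f x‖ * ‖f' x‖ := by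
        simpa [hh', norm_mul] using norm_add_le (f' x * (starRingEnd ℂ) (f x))
          (f x * (starRingEnd ℂ) (f' x))
      nlinarith [norm_nonneg (f x), norm_nonneg (f' x), sq_nonneg (‖f x‖ - ‖f' x‖)]
  have key : ∀ x : ℝ, g x = g 0 + ∫ t in (0:ℝ)..x, g' t := by
    intro x
    have := intervalIntegral.integral_eq_sub_of_hasDerivAt
      (f := g) (f' := g') (a := 0) (b := x) (fun t _ => hdg t)
      (hg'int.intervalIntegrable)
    linarith [this]
  have hTop : Tendsto g atTop (nhds (g 0 + ∫ t in Ioi (0:ℝ), g' t)) := by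
    have := intervalIntegral_tendsto_integral_Ioi (0:ℝ) hg'int.integrableOn tendsto_id
    exact (tendsto_const_nhds.add this).congr fun x => (key x).symm
  have hBot : Tendsto g atBot (nhds (g 0 - ∫ t in Iic (0:ℝ), g' t)) := by
    have := intervalIntegral_tendsto_integral_Iic (0:ℝ) hg'int.integrableOn tendsto_id
    refine (tendsto_const_nhds.sub this).congr fun x => ?_
    rw [key x]
    simp only [id]
    rw [intervalIntegral.integral_symm 0 x]
    ring
  have hT0 : Tendsto g atTop (nhds 0) := by
    have := limit_zero_of_integrable_atTop hgint hTop
    rwa [this] at hTop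
  have hB0 : Tendsto g atBot (nhds 0) := by
    have := limit_zero_of_integrable_atBot hgint hBot
    rwa [this] at hBot
  have norm_eq : ∀ x, ‖f x‖ = Real.sqrt (g x) := fun x => (Real.sqrt_sq (norm_nonneg _)).symm
  constructor
  · refine tendsto_zero_iff_norm_tendsto_zero.2 ?_
    have : Tendsto (fun x => Real.sqrt (g x)) atTop (nhds (Real.sqrt 0)) :=
      (Real.continuous_sqrt.tendsto 0).comp hT0
    simpa [Real.sqrt_zero, ← norm_eq] using this
  · refine tendsto_zero_iff_norm_tendsto_zero.2 ?_
    have : Tendsto (fun x => Real.sqrt (g x)) atBot (nhds (Real.sqrt 0)) :=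
      (Real.continuous_sqrt.tendsto 0).comp hB0
    simpa [Real.sqrt_zero, ← norm_eq] using this

set_option maxHeartbeats 1000000

/-- The Burgers viscous shock profile of amplitude `ε`. -/
noncomputable def burgersProfile (ε : ℝ) (x : ℝ) : ℝ := -ε * Real.tanh (ε * x / 2)

/-- **Parabolic bound on the unstable spectrum of the Burgers linearization**
(scaling estimate from Section 1): any eigenvalue `λ` of the linearization of
Burgers equation about the amplitude-`ε` profile satisfies `Re λ ≤ ε²/4`, and if
`Re λ ≥ 0` also `|Im λ| ≤ ε²`; in particular any nonstable eigenvalue satisfies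
`|λ| ≤ 2 ε²`. -/
theorem burgers_spectrum_parabolic_bound
    (ε : ℝ) (hε : 0 < ε) (lam : ℂ)
    (w : ℝ → ℂ) (hw : ContDiff ℝ 2 w) (hw0 : w ≠ 0)
    (hwL2 : MemLp w 2 volume) (hw'L2 : MemLp (deriv w) 2 volume)
    (heq : ∀ x : ℝ,
      deriv (deriv w) x
        = deriv (fun y => (burgersProfile ε y : ℂ) * w y) x + lam * w x) :
    lam.re ≤ ε ^ 2 / 4 ∧
      (0 ≤ lam.re → |lam.im| ≤ ε ^ 2) ∧
      (0 ≤ lam.re → ‖lam‖ ≤ 2 * ε ^ 2) := by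
  set u : ℝ → ℂ := fun x => ((burgersProfile ε x : ℝ) : ℂ) with hu_def
  set u' : ℝ → ℂ := fun x => ((-(ε ^ 2 / 2) * (1 / Real.cosh (ε * x / 2) ^ 2) : ℝ) : ℂ)
    with hu'_def
  have htanh : ∀ y : ℝ, HasDerivAt Real.tanh (1 / Real.cosh y ^ 2) y := by
    intro y
    have h := (Real.hasDerivAt_sinh y).div (Real.hasDerivAt_cosh y) (Real.cosh_pos y).ne'
    have hts : (Real.sinh / Real.cosh) = Real.tanh := by
      funext z; rw [Pi.div_apply, Real.tanh_eq_sinh_div_cosh]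
    rw [hts] at h
    refine h.congr_deriv ?_
    have h2 := Real.cosh_sq_sub_sinh_sq y
    have h3 := (Real.cosh_pos y).ne'
    rw [div_left_inj' (pow_ne_zero 2 h3)]
    nlinarith [h2]
  have hud : ∀ x : ℝ, HasDerivAt u (u' x) x := by
    intro x
    have hlin : HasDerivAt (fun x : ℝ => ε * x / 2) (ε / 2) x := by
      simpa using ((hasDerivAt_id x).const_mul ε).div_const 2
    have h1 : HasDerivAt (fun x : ℝ => Real.tanh (ε * x / 2))
        (1 / Real.cosh (ε * x / 2) ^ 2 * (ε / 2)) x := (htanh _).comp x hlin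
    have h2 : HasDerivAt (fun x : ℝ => burgersProfile ε x)
        (-(ε ^ 2 / 2) * (1 / Real.cosh (ε * x / 2) ^ 2)) x := by
      have h3 := h1.const_mul (-ε)
      refine h3.congr_deriv ?_
      ring
    exact h2.ofReal_comp
  have htanh_le : ∀ y : ℝ, |Real.tanh y| ≤ 1 := by
    intro y
    have h1 := Real.cosh_pos y
    have h2 : |Real.sinh y| ≤ Real.cosh y := by
      rw [abs_le]
      constructor
      · nlinarith [Real.exp_pos y, Real.cosh_add_sinh y]
      · nlinarith [Real.exp_pos (-y), Real.cosh_sub_sinh y]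
    rw [Real.tanh_eq_sinh_div_cosh, abs_div, _root_.abs_of_pos h1, div_le_one h1]
    exact h2
  have hub : ∀ x : ℝ, ‖u x‖ ≤ ε := by
    intro x
    rw [hu_def]
    simp only [Complex.norm_real]
    rw [burgersProfile, Real.norm_eq_abs, abs_mul, abs_neg, _root_.abs_of_pos hε]
    calc ε * |Real.tanh (ε * x / 2)| ≤ ε * 1 :=
          mul_le_mul_of_nonneg_left (htanh_le _) hε.le
      _ = ε := mul_one ε
  have hub' : ∀ x : ℝ, ‖u' x‖ ≤ ε ^ 2 / 2 := by
    intro x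
    rw [hu'_def]
    simp only [Complex.norm_real]
    have h1 : (1:ℝ) ≤ Real.cosh (ε * x / 2) := Real.one_le_cosh _
    have h2 : (0:ℝ) < Real.cosh (ε * x / 2) ^ 2 := by positivity
    have h3 : 1 / Real.cosh (ε * x / 2) ^ 2 ≤ 1 := by
      rw [div_le_one h2]; nlinarith
    have h4 : (0:ℝ) ≤ 1 / Real.cosh (ε * x / 2) ^ 2 := by positivity
    rw [Real.norm_eq_abs, abs_mul, abs_neg,
      _root_.abs_of_nonneg (by positivity : (0:ℝ) ≤ ε ^ 2 / 2), _root_.abs_of_nonneg h4]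
    nlinarith
  -- derivatives and continuity of w
  have hw1 : Differentiable ℝ w := hw.differentiable two_ne_zero
  have hwd : ∀ x, HasDerivAt w (deriv w x) x := fun x => (hw1 x).hasDerivAt
  have hw2 : ContDiff ℝ 1 (deriv w) := by
    have h2 : ContDiff ℝ (1 + 1) w := by
      rw [show ((1:WithTop ℕ∞) + 1) = 2 by norm_num]; exact hw
    exact (contDiff_succ_iff_deriv.1 h2).2.2
  have hw1c : Continuous w := hw.continuous
  have hw'c : Continuous (deriv w) := hw2.continuous
  have hw'd : ∀ x, HasDerivAt (deriv w) (deriv (deriv w) x) x :=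
    fun x => ((hw2.differentiable one_ne_zero) x).hasDerivAt
  have hw''c : Continuous (deriv (deriv w)) := hw2.continuous_deriv le_rfl
  have huc : Continuous u := continuous_iff_continuousAt.2 fun x => (hud x).continuousAt
  have hu'c : Continuous u' := by
    rw [hu'_def]
    refine Complex.continuous_ofReal.comp ?_
    refine Continuous.mul continuous_const ?_
    refine Continuous.div continuous_const ?_ ?_
    · exact (Real.continuous_cosh.comp ((continuous_const.mul continuous_id).div_const 2)).pow 2
    · intro x
      have := Real.cosh_pos (ε * x / 2)
      positivity
  -- the eigenvalue equation rewritten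
  set E : ℝ → ℂ := fun x => u' x * w x + u x * deriv w x with hE_def
  have hderiv_uw : ∀ x, HasDerivAt (fun y => u y * w y) (E x) x := fun x => (hud x).mul (hwd x)
  have heq' : ∀ x, deriv (deriv w) x = E x + lam * w x := by
    intro x
    rw [heq x, ← (hderiv_uw x).deriv]
  have hEc : Continuous E := (hu'c.mul hw1c).add (huc.mul hw'c)
  -- MemLp of the second derivative
  have hWMem : MemLp (deriv (deriv w)) 2 volume := by
    have h1 : MemLp (fun x => u' x * w x) 2 volume := by
      refine MemLp.of_le_mul (c := ε ^ 2 / 2) hwL2 ((hu'c.mul hw1c).aestronglyMeasurable)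
        (ae_of_all _ fun x => ?_)
      rw [norm_mul]
      exact mul_le_mul_of_nonneg_right (hub' x) (norm_nonneg _)
    have h2 : MemLp (fun x => u x * deriv w x) 2 volume := by
      refine MemLp.of_le_mul (c := ε) hw'L2 ((huc.mul hw'c).aestronglyMeasurable)
        (ae_of_all _ fun x => ?_)
      rw [norm_mul]
      exact mul_le_mul_of_nonneg_right (hub x) (norm_nonneg _)
    have h3 : MemLp (fun x => lam * w x) 2 volume := hwL2.const_mul lam
    have hfe : deriv (deriv w) = fun x => (u' x * w x + u x * deriv w x) + lam * w x :=
      funext fun x => heq' x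
    rw [hfe]
    exact (h1.add h2).add h3
  -- decay at infinity
  obtain ⟨hwT, hwB⟩ := tendsto_zero_of_memL2 hwd hw'c hwL2 hw'L2
  obtain ⟨hw'T, hw'B⟩ := tendsto_zero_of_memL2 hw'd hw''c hw'L2 hWMem
  -- integrability
  have hA2 : Integrable (fun x => ‖w x‖ ^ 2) :=
    (memLp_two_iff_integrable_sq_norm hwL2.aestronglyMeasurable).1 hwL2
  have hB2 : Integrable (fun x => ‖deriv w x‖ ^ 2) :=
    (memLp_two_iff_integrable_sq_norm hw'L2.aestronglyMeasurable).1 hw'L2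
  have hm : Integrable (fun x => ‖w x‖ ^ 2 + ‖deriv w x‖ ^ 2) := hA2.add hB2
  have intKey : ∀ (F : ℝ → ℂ) (C : ℝ), Continuous F →
      (∀ x, ‖F x‖ ≤ C * (‖w x‖ ^ 2 + ‖deriv w x‖ ^ 2)) → Integrable F := by
    intro F C hc hb
    exact Integrable.mono' (hm.const_mul C) hc.aestronglyMeasurable (ae_of_all _ hb)
  have hnconj : ∀ z : ℂ, ‖(starRingEnd ℂ) z‖ = ‖z‖ := fun z => by
    rw [starRingEnd_apply, norm_star]
  have hconjw : Continuous fun x => (starRingEnd ℂ) (w x) := by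
    simp only [starRingEnd_apply]; exact continuous_star.comp hw1c
  have hconjw' : Continuous fun x => (starRingEnd ℂ) (deriv w x) := by
    simp only [starRingEnd_apply]; exact continuous_star.comp hw'c
  have hEbound : ∀ x, ‖E x‖ ≤ ε ^ 2 / 2 * ‖w x‖ + ε * ‖deriv w x‖ := by
    intro x
    calc ‖E x‖ ≤ ‖u' x * w x‖ + ‖u x * deriv w x‖ := norm_add_le _ _
      _ ≤ ε ^ 2 / 2 * ‖w x‖ + ε * ‖deriv w x‖ := by
          rw [norm_mul, norm_mul]
          exact add_le_add (mul_le_mul_of_nonneg_right (hub' x) (norm_nonneg _))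
            (mul_le_mul_of_nonneg_right (hub x) (norm_nonneg _))
  have int1 : Integrable (fun x => deriv (deriv w) x * (starRingEnd ℂ) (w x)) := by
    refine intKey _ (ε ^ 2 / 2 + ε + ‖lam‖) (hw''c.mul hconjw) fun x => ?_
    rw [norm_mul, hnconj]
    have h1 : ‖deriv (deriv w) x‖ ≤ (ε ^ 2 / 2 + ‖lam‖) * ‖w x‖ + ε * ‖deriv w x‖ := by
      rw [heq' x]
      calc ‖E x + lam * w x‖ ≤ ‖E x‖ + ‖lam * w x‖ := norm_add_le _ _
        _ ≤ (ε ^ 2 / 2 * ‖w x‖ + ε * ‖deriv w x‖) + ‖lam‖ * ‖w x‖ := by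
            rw [norm_mul]
            exact add_le_add (hEbound x) le_rfl
        _ = (ε ^ 2 / 2 + ‖lam‖) * ‖w x‖ + ε * ‖deriv w x‖ := by ring
    have hab := norm_nonneg (w x)
    have hcd := norm_nonneg (deriv w x)
    have hl : (0:ℝ) ≤ ‖lam‖ := norm_nonneg lam
    nlinarith [sq_nonneg (‖w x‖ - ‖deriv w x‖), sq_nonneg (‖w x‖ + ‖deriv w x‖),
      mul_le_mul_of_nonneg_right h1 hab]
  have int2 : Integrable (fun x => deriv w x * (starRingEnd ℂ) (deriv w x)) := by
    refine intKey _ 1 (hw'c.mul hconjw') fun x => ?_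
    rw [norm_mul, hnconj]
    nlinarith [sq_nonneg (‖w x‖), norm_nonneg (deriv w x)]
  have int3 : Integrable (fun x => E x * (starRingEnd ℂ) (w x)) := by
    refine intKey _ (ε ^ 2 / 2 + ε) (hEc.mul hconjw) fun x => ?_
    rw [norm_mul, hnconj]
    have h1 := hEbound x
    have hab := norm_nonneg (w x)
    have hcd := norm_nonneg (deriv w x)
    nlinarith [sq_nonneg (‖w x‖ - ‖deriv w x‖), mul_le_mul_of_nonneg_right h1 hab]
  have int4 : Integrable (fun x => u x * w x * (starRingEnd ℂ) (deriv w x)) := by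
    refine intKey _ ε ((huc.mul hw1c).mul hconjw') fun x => ?_
    rw [norm_mul, norm_mul, hnconj]
    have hab := norm_nonneg (w x)
    have hcd := norm_nonneg (deriv w x)
    have h1 := hub x
    nlinarith [sq_nonneg (‖w x‖ - ‖deriv w x‖), norm_nonneg (u x)]
  have int5 : Integrable (fun x => w x * (starRingEnd ℂ) (w x)) := by
    refine intKey _ 1 (hw1c.mul hconjw) fun x => ?_
    rw [norm_mul, hnconj]
    nlinarith [sq_nonneg (‖deriv w x‖), norm_nonneg (w x)]
  have intD : Integrable (fun x => ‖w x‖ * ‖deriv w x‖) := by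
    refine Integrable.mono' hm (hw1c.norm.mul hw'c.norm).aestronglyMeasurable
      (ae_of_all _ fun x => ?_)
    rw [Real.norm_eq_abs, _root_.abs_of_nonneg (by positivity)]
    nlinarith [sq_nonneg (‖w x‖ - ‖deriv w x‖)]
  -- integration by parts
  have hconjTT : Tendsto (fun y => (starRingEnd ℂ) (w y)) atTop (nhds 0) := by
    simp only [starRingEnd_apply]
    have := (continuous_star.tendsto (0:ℂ)).comp hwT
    simpa [Function.comp_def] using this
  have hconjTB : Tendsto (fun y => (starRingEnd ℂ) (w y)) atBot (nhds 0) := by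
    simp only [starRingEnd_apply]
    have := (continuous_star.tendsto (0:ℂ)).comp hwB
    simpa [Function.comp_def] using this
  have hIBP1 : ∫ x, (deriv (deriv w) x * (starRingEnd ℂ) (w x)
      + deriv w x * (starRingEnd ℂ) (deriv w x)) = 0 := by
    refine integral_deriv_eq_zero' (F := fun y => deriv w y * (starRingEnd ℂ) (w y))
      (fun x => ?_) (int1.add int2) ?_ ?_
    · simpa only [starRingEnd_apply, Pi.mul_def] using (hw'd x).mul (hwd x).star
    · simpa using hw'T.mul hconjTT
    · simpa using hw'B.mul hconjTB
  have hIBP2 : ∫ x, (E x * (starRingEnd ℂ) (w x)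
      + u x * w x * (starRingEnd ℂ) (deriv w x)) = 0 := by
    refine integral_deriv_eq_zero' (F := fun y => u y * w y * (starRingEnd ℂ) (w y))
      (fun x => ?_) (int3.add int4) ?_ ?_
    · simpa only [starRingEnd_apply, Pi.mul_def, Pi.mul_apply] using ((hud x).mul (hwd x)).mul (hwd x).star
    · refine squeeze_zero_norm (a := fun x => ε * (‖w x‖ * ‖w x‖)) (fun x => ?_) ?_
      · show ‖u x * w x * (starRingEnd ℂ) (w x)‖ ≤ ε * (‖w x‖ * ‖w x‖)
        rw [norm_mul, norm_mul, hnconj]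
        nlinarith [mul_le_mul_of_nonneg_right (hub x)
          (mul_nonneg (norm_nonneg (w x)) (norm_nonneg (w x)))]
      · have := (hwT.norm.mul hwT.norm).const_mul ε
        simpa using this
    · refine squeeze_zero_norm (a := fun x => ε * (‖w x‖ * ‖w x‖)) (fun x => ?_) ?_
      · show ‖u x * w x * (starRingEnd ℂ) (w x)‖ ≤ ε * (‖w x‖ * ‖w x‖)
        rw [norm_mul, norm_mul, hnconj]
        nlinarith [mul_le_mul_of_nonneg_right (hub x)
          (mul_nonneg (norm_nonneg (w x)) (norm_nonneg (w x)))]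
      · have := (hwB.norm.mul hwB.norm).const_mul ε
        simpa using this
  -- linearity from the eigenvalue equation
  have hptw : ∀ x, deriv (deriv w) x * (starRingEnd ℂ) (w x)
      = E x * (starRingEnd ℂ) (w x) + lam * (w x * (starRingEnd ℂ) (w x)) := by
    intro x; rw [heq' x]; ring
  have he3 : ∫ x, deriv (deriv w) x * (starRingEnd ℂ) (w x)
      = (∫ x, E x * (starRingEnd ℂ) (w x)) + lam * ∫ x, w x * (starRingEnd ℂ) (w x) := by
    calc ∫ x, deriv (deriv w) x * (starRingEnd ℂ) (w x)
        = ∫ x, (E x * (starRingEnd ℂ) (w x) + lam * (w x * (starRingEnd ℂ) (w x))) := by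
          simp_rw [hptw]
      _ = _ := by
          rw [integral_add int3 (int5.const_mul lam), integral_const_mul]
  -- the scalar quantities
  set A : ℝ := ∫ x, ‖w x‖ ^ 2 with hA_def
  set B : ℝ := ∫ x, ‖deriv w x‖ ^ 2 with hB_def
  set D : ℝ := ∫ x, ‖w x‖ * ‖deriv w x‖ with hD_def
  set I4 : ℂ := ∫ x, u x * w x * (starRingEnd ℂ) (deriv w x) with hI4_def
  have hmulconj : ∀ z : ℂ, z * (starRingEnd ℂ) z = ((‖z‖ ^ 2 : ℝ) : ℂ) := by
    intro z
    rw [Complex.mul_conj, Complex.normSq_eq_norm_sq]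
  have h5A : ∫ x, w x * (starRingEnd ℂ) (w x) = ((A : ℝ) : ℂ) := by
    have step : ∫ x, w x * (starRingEnd ℂ) (w x) = ∫ x, ((‖w x‖ ^ 2 : ℝ) : ℂ) :=
      integral_congr_ae (ae_of_all _ fun x => hmulconj (w x))
    rw [step, hA_def]
    exact integral_ofReal
  have h5B : ∫ x, deriv w x * (starRingEnd ℂ) (deriv w x) = ((B : ℝ) : ℂ) := by
    have step : ∫ x, deriv w x * (starRingEnd ℂ) (deriv w x)
        = ∫ x, ((‖deriv w x‖ ^ 2 : ℝ) : ℂ) :=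
      integral_congr_ae (ae_of_all _ fun x => hmulconj (deriv w x))
    rw [step, hB_def]
    exact integral_ofReal
  have e1 : (∫ x, deriv (deriv w) x * (starRingEnd ℂ) (w x)) = -((B:ℝ):ℂ) := by
    have h0 : (∫ x, deriv (deriv w) x * (starRingEnd ℂ) (w x))
        + ∫ x, deriv w x * (starRingEnd ℂ) (deriv w x) = 0 := by
      rw [← integral_add int1 int2]; exact hIBP1
    rw [h5B] at h0
    linear_combination h0
  have e2 : (∫ x, E x * (starRingEnd ℂ) (w x)) = -I4 := by
    have h0 : (∫ x, E x * (starRingEnd ℂ) (w x))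
        + ∫ x, u x * w x * (starRingEnd ℂ) (deriv w x) = 0 := by
      rw [← integral_add int3 int4]; exact hIBP2
    rw [← hI4_def] at h0
    exact eq_neg_of_add_eq_zero_left h0
  have hmaster : lam * ((A:ℝ):ℂ) = I4 - ((B:ℝ):ℂ) := by
    have h := he3
    rw [e1, e2, h5A] at h
    linear_combination -h
  -- real and imaginary parts
  have hre : lam.re * A = I4.re - B := by
    have h := congrArg Complex.re hmaster
    simpa [Complex.mul_re] using h
  have him : lam.im * A = I4.im := by
    have h := congrArg Complex.im hmaster
    simpa [Complex.mul_im] using h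
  -- positivity
  have hAnn : 0 ≤ A := integral_nonneg fun x => sq_nonneg _
  have hBnn : 0 ≤ B := integral_nonneg fun x => sq_nonneg _
  have hDnn : 0 ≤ D := integral_nonneg fun x => mul_nonneg (norm_nonneg _) (norm_nonneg _)
  have hApos : 0 < A := by
    rcases hAnn.lt_or_eq with h | h
    · exact h
    · exfalso
      have h0 := (integral_eq_zero_iff_of_nonneg (fun x => sq_nonneg (‖w x‖)) hA2).1 h.symm
      have hw0' : w =ᵐ[volume] 0 := by
        filter_upwards [h0] with x hx
        have hx2 : ‖w x‖ ^ 2 = 0 := hx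
        have hx3 : ‖w x‖ = 0 := by
          have := sq_eq_zero_iff.1 hx2
          simpa using this
        simpa using norm_eq_zero.1 hx3
      exact hw0 ((hw1c.ae_eq_iff_eq volume continuous_const).1 hw0')
  -- bound on I4
  have hI4norm : ‖I4‖ ≤ ε * D := by
    have h1 : ‖∫ x, u x * w x * (starRingEnd ℂ) (deriv w x)‖
        ≤ ∫ x, ‖u x * w x * (starRingEnd ℂ) (deriv w x)‖ := norm_integral_le_integral_norm _
    have h2 : ∫ x, ‖u x * w x * (starRingEnd ℂ) (deriv w x)‖
        ≤ ∫ x, ε * (‖w x‖ * ‖deriv w x‖) := by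
      refine integral_mono int4.norm (intD.const_mul ε) fun x => ?_
      rw [norm_mul, norm_mul, hnconj]
      nlinarith [mul_le_mul_of_nonneg_right (hub x)
        (mul_nonneg (norm_nonneg (w x)) (norm_nonneg (deriv w x)))]
    rw [integral_const_mul, ← hD_def] at h2
    rw [hI4_def]
    exact h1.trans h2
  -- two AM-GM estimates
  have ineq1 : ε * D ≤ ε ^ 2 / 4 * A + B := by
    have h : ∫ x, ε * (‖w x‖ * ‖deriv w x‖)
        ≤ ∫ x, (ε ^ 2 / 4 * ‖w x‖ ^ 2 + ‖deriv w x‖ ^ 2) := by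
      refine integral_mono (intD.const_mul ε) ((hA2.const_mul (ε ^ 2 / 4)).add hB2) fun x => ?_
      nlinarith [sq_nonneg (ε * ‖w x‖ / 2 - ‖deriv w x‖)]
    rw [integral_const_mul, ← hD_def,
      integral_add (hA2.const_mul (ε ^ 2 / 4)) hB2, integral_const_mul, ← hA_def, ← hB_def] at h
    exact h
  have ineq2 : ε * D ≤ ε ^ 2 / 2 * A + (1 / 2) * B := by
    have h : ∫ x, ε * (‖w x‖ * ‖deriv w x‖)
        ≤ ∫ x, (ε ^ 2 / 2 * ‖w x‖ ^ 2 + (1 / 2) * ‖deriv w x‖ ^ 2) := by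
      refine integral_mono (intD.const_mul ε)
        ((hA2.const_mul (ε ^ 2 / 2)).add (hB2.const_mul (1 / 2))) fun x => ?_
      nlinarith [sq_nonneg (ε * ‖w x‖ - ‖deriv w x‖)]
    rw [integral_const_mul, ← hD_def,
      integral_add (hA2.const_mul (ε ^ 2 / 2)) (hB2.const_mul (1 / 2)),
      integral_const_mul, integral_const_mul, ← hA_def, ← hB_def] at h
    exact h
  -- conclusions
  have hre_le : I4.re ≤ ‖I4‖ := Complex.re_le_norm I4
  have part1 : lam.re ≤ ε ^ 2 / 4 := by
    have hmul : lam.re * A ≤ ε ^ 2 / 4 * A := by linarith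
    exact le_of_mul_le_mul_right hmul hApos
  have part2 : 0 ≤ lam.re → |lam.im| ≤ ε ^ 2 := by
    intro hre0
    have h1 : 0 ≤ lam.re * A := mul_nonneg hre0 hApos.le
    have hBle : B ≤ ε * D := by linarith
    have hDle : ε * D ≤ ε ^ 2 * A := by linarith
    have h4 : |lam.im| * A = |I4.im| := by
      rw [← him, abs_mul, _root_.abs_of_nonneg hApos.le]
    have h3 : |I4.im| ≤ ‖I4‖ := Complex.abs_im_le_norm I4
    have himle : |lam.im| * A ≤ ε ^ 2 * A := by linarith
    exact le_of_mul_le_mul_right himle hApos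
  refine ⟨part1, part2, ?_⟩
  intro hre0
  have h1 := Complex.norm_le_abs_re_add_abs_im lam
  have h2 : |lam.re| ≤ ε ^ 2 / 4 := by
    rw [_root_.abs_of_nonneg hre0]; exact part1
  have h3 := part2 hre0
  nlinarith [sq_nonneg ε]
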